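/- Let q : ℕ → [0,1] be a probability mass function with q(n) ~ C/n² as n → ∞ (C > 0), and let u(n) := ∑_{k≥0} q^{*k}(n) be the renewal mass function. Then ∑_{0 ≤ i ≤ N/2 ≤ j ≤ N+1, j - i ≥ N/log N} u(i) q(j-i) u(N+1-j) / u(N+1) → 0 as N → ∞, given u(n) ~ 1/(C log n). -/

import Mathlib

open Filter

/-- Discrete convolution on `ℕ`. -/
noncomputable def nconv (f g : ℕ → ℝ) : ℕ → ℝ :=
  fun n => ∑ m ∈ Finset.range (n + 1), f m * g (n - m)

/-- `k`-fold convolution power of `f`, with `f^{*0} = δ₀`. -/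
noncomputable def convPow (f : ℕ → ℝ) : ℕ → ℕ → ℝ
  | 0 => fun n => if n = 0 then 1 else 0
  | (k + 1) => nconv f (convPow f k)

lemma convPow_nonneg {q : ℕ → ℝ} (hq0 : ∀ n, 0 ≤ q n) : ∀ k n, 0 ≤ convPow q k n := by
  intro k
  induction k with
  | zero => intro n; simp only [convPow]; positivity
  | succ k ih =>
    intro n
    simp only [convPow, nconv]
    exact Finset.sum_nonneg fun m _ => mul_nonneg (hq0 m) (ih (n - m))

-- tail of inverse squares over Icc
lemma sum_Icc_inv_sq_le' (m n : ℕ) (hm : 1 ≤ m) :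
    ∑ d ∈ Finset.Icc m n, ((d : ℝ) ^ 2)⁻¹ ≤ 2 / m := by
  have h : Finset.Icc m n ⊆ Finset.Ioo (m - 1) (n + 1) := by
    intro d hd
    simp only [Finset.mem_Icc] at hd
    simp only [Finset.mem_Ioo]
    omega
  calc ∑ d ∈ Finset.Icc m n, ((d : ℝ) ^ 2)⁻¹
      ≤ ∑ d ∈ Finset.Ioo (m - 1) (n + 1), ((d : ℝ) ^ 2)⁻¹ := by
        apply Finset.sum_le_sum_of_subset_of_nonneg h
        intro i _ _; positivity
    _ ≤ 2 / ((m - 1 : ℕ) + 1) := sum_Ioo_inv_sq_le _ _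
    _ = 2 / m := by congr 1; have : m - 1 + 1 = m := Nat.succ_pred_eq_of_pos hm; push_cast [this]; rw [← this]; push_cast; ring

-- telescoping log bound
lemma sum_range_inv_le_log (a n : ℕ) (ha : 1 ≤ a) :
    ∑ i ∈ Finset.range n, (1 : ℝ) / (a + 1 + i) ≤ Real.log (a + n) - Real.log a := by
  have key : ∀ i : ℕ, (1 : ℝ) / (a + 1 + i) ≤ Real.log (a + (i+1)) - Real.log (a + i) := by
    intro i
    have hx : (0:ℝ) < a + i := by positivity
    have h1 : (0:ℝ) < a + i + 1 := by linarith
    have := Real.log_le_sub_one_of_pos (x := (a + i) / (a + i + 1)) (by positivity)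
    rw [Real.log_div (by positivity) (by positivity)] at this
    have : Real.log (a + i + 1) - Real.log (a + i) ≥ 1 / (a + i + 1) := by
      have h2 : (a + i : ℝ) / (a + i + 1) - 1 = -(1 / (a+i+1)) := by field_simp; ring
      linarith [this, h2 ▸ this]
    calc (1:ℝ) / (a + 1 + i) = 1 / (a + i + 1) := by ring_nf
      _ ≤ Real.log (a + i + 1) - Real.log (a + i) := this
      _ = Real.log (a + ((i:ℝ)+1)) - Real.log (a + i) := by ring_nf
  calc ∑ i ∈ Finset.range n, (1 : ℝ) / (a + 1 + i)
      ≤ ∑ i ∈ Finset.range n, (Real.log (a + ((i:ℕ)+1:ℕ)) - Real.log (a + i)) := by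
        refine Finset.sum_le_sum fun i _ => ?_
        have := key i
        push_cast
        push_cast at this
        linarith
    _ = Real.log (a + n) - Real.log a := by
        rw [Finset.sum_range_sub (fun i : ℕ => Real.log (a + i)) n]
        norm_num

lemma tail_bound (q : ℕ → ℝ) (hq0 : ∀ n, 0 ≤ q n) (K : ℝ) (hK0 : 0 ≤ K)
    (hK : ∀ d : ℕ, 1 ≤ d → q d ≤ K * ((d : ℝ) ^ 2)⁻¹)
    (i N : ℕ) (t : ℝ) (ht : 1 ≤ t) :
    ∑ j ∈ (Finset.range (N + 2)).filter (fun j : ℕ => t ≤ (j : ℝ) - i), q (j - i)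
      ≤ 2 * K / t := by
  set s := (Finset.range (N + 2)).filter (fun j : ℕ => t ≤ (j : ℝ) - i) with hs
  have hmem : ∀ j ∈ s, i < j ∧ j ≤ N + 1 := by
    intro j hj
    rw [hs, Finset.mem_filter, Finset.mem_range] at hj
    constructor
    · by_contra h
      push_neg at h
      have : (j : ℝ) ≤ i := Nat.cast_le.2 h
      linarith [hj.2]
    · omega
  have hinj : Set.InjOn (fun j => j - i) s := by
    intro a ha b hb hab
    have h1 := (hmem a ha).1
    have h2 := (hmem b hb).1
    simp only at hab
    omega
  have himg : s.image (fun j => j - i) ⊆ Finset.Icc (⌈t⌉₊) (N + 1) := by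
    intro d hd
    rw [Finset.mem_image] at hd
    obtain ⟨j, hj, rfl⟩ := hd
    obtain ⟨h1, h2⟩ := hmem j hj
    rw [hs, Finset.mem_filter] at hj
    have hc : ((j - i : ℕ) : ℝ) = (j : ℝ) - i := by
      push_cast [Nat.cast_sub h1.le]; ring
    rw [Finset.mem_Icc]
    refine ⟨Nat.ceil_le.2 ?_, by omega⟩
    rw [hc]; exact hj.2
  have hmt : 1 ≤ ⌈t⌉₊ := Nat.one_le_ceil_iff.2 (by linarith)
  calc ∑ j ∈ s, q (j - i) = ∑ d ∈ s.image (fun j => j - i), q d :=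
        (Finset.sum_image (fun a ha b hb h => hinj ha hb h)).symm
    _ ≤ ∑ d ∈ Finset.Icc (⌈t⌉₊) (N + 1), q d :=
        Finset.sum_le_sum_of_subset_of_nonneg himg (fun d _ _ => hq0 d)
    _ ≤ ∑ d ∈ Finset.Icc (⌈t⌉₊) (N + 1), K * ((d : ℝ) ^ 2)⁻¹ :=
        Finset.sum_le_sum (fun d hd => hK d (by rw [Finset.mem_Icc] at hd; omega))
    _ = K * ∑ d ∈ Finset.Icc (⌈t⌉₊) (N + 1), ((d : ℝ) ^ 2)⁻¹ := by rw [Finset.mul_sum]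
    _ ≤ K * (2 / ⌈t⌉₊) := by
        apply mul_le_mul_of_nonneg_left (sum_Icc_inv_sq_le' _ _ hmt) hK0
    _ ≤ 2 * K / t := by
        have h1 : t ≤ (⌈t⌉₊ : ℝ) := Nat.le_ceil t
        have h2 : (0:ℝ) < ⌈t⌉₊ := by positivity
        have h3 : (2:ℝ)/(⌈t⌉₊:ℝ) ≤ 2/t :=
          div_le_div_of_nonneg_left (by norm_num) (by linarith) h1
        calc K * (2 / (⌈t⌉₊:ℝ)) ≤ K * (2/t) := mul_le_mul_of_nonneg_left h3 hK0
          _ = 2 * K / t := by ring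

lemma sum_prod_filter_eq (s t : Finset ℕ) (Q : ℕ → ℕ → Prop) [∀ i j : ℕ, Decidable (Q i j)]
    (g : ℕ × ℕ → ℝ) :
    ∑ p ∈ (s ×ˢ t).filter (fun p => Q p.1 p.2), g p
      = ∑ i ∈ s, ∑ j ∈ t.filter (Q i), g (i, j) := by
  rw [Finset.sum_filter, Finset.sum_product]
  congr 1
  ext i
  rw [Finset.sum_filter]

set_option maxHeartbeats 1600000 in
lemma key_est (q u : ℕ → ℝ) (hq0 : ∀ n, 0 ≤ q n) (hu0 : ∀ n, 0 ≤ u n)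
    (C M K A : ℝ) (hC : 0 < C) (hM1 : 1 ≤ M) (hM : ∀ n, u n ≤ M)
    (hK1 : 1 ≤ K) (hK : ∀ d : ℕ, 1 ≤ d → q d ≤ K * ((d : ℝ) ^ 2)⁻¹)
    (hA0 : 0 < A) (n₀ : ℕ) (hn₀ : ∀ n, n₀ ≤ n → Real.log n * u n ≤ A)
    (N : ℕ) (hN256 : 256 ≤ N) (hL4 : 4 ≤ Real.log N) (hNL : 2 * Real.log N ≤ (N : ℝ))
    (hn0sq : n₀ ≤ Nat.sqrt N + 1) (hden : 1 / (2 * C) ≤ Real.log ((N : ℝ) + 1) * u (N + 1)) :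
    (∑ p ∈ (Finset.range (N + 2) ×ˢ Finset.range (N + 2)).filter
        (fun p => (p.1 : ℝ) ≤ N / 2 ∧ (N : ℝ) / 2 ≤ p.2 ∧
          (N : ℝ) / Real.log N ≤ (p.2 : ℝ) - p.1),
      u p.1 * q (p.2 - p.1) * u (N + 1 - p.2)) / u (N + 1)
    ≤ 32 * C * M ^ 2 * K * ((Real.log N) ^ 3 / Real.sqrt N)
      + 32 * C * A ^ 2 * K * ((2 + Real.log (Real.log N)) / Real.log N) := by
  have hK0 : (0:ℝ) ≤ K := by linarith
  have hL0 : (0:ℝ) < Real.log N := by linarith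
  have hN0 : (0:ℝ) < N := by
    have : (256:ℝ) ≤ N := by exact_mod_cast hN256
    linarith
  have hN256R : (256:ℝ) ≤ N := by exact_mod_cast hN256
  have hT1 : (1:ℝ) ≤ (N:ℝ) / Real.log N := by
    rw [le_div_iff₀ hL0]; linarith
  have hTpos : (0:ℝ) < (N:ℝ) / Real.log N := by linarith
  set L := Real.log N with hLdef
  set Sn := Nat.sqrt N with hSn_def
  set H := N / 2 with hH_def
  set F := (Finset.range (N + 2) ×ˢ Finset.range (N + 2)).filter
        (fun p => (p.1 : ℝ) ≤ N / 2 ∧ (N : ℝ) / 2 ≤ p.2 ∧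
          (N : ℝ) / Real.log N ≤ (p.2 : ℝ) - p.1) with hF_def
  -- basic nat facts
  have hSnleN : Sn ≤ N := Nat.sqrt_le_self N
  have hHN : 2 * H ≤ N := by omega
  have hN2H : N ≤ 2 * H + 1 := by omega
  have hHR : (H:ℝ) ≤ (N:ℝ)/2 := by
    have : (2*H : ℕ) ≤ (N:ℕ) := hHN
    have := (Nat.cast_le (α := ℝ)).2 this
    push_cast at this
    linarith
  have hHR2 : ((N:ℝ)-1)/2 ≤ (H:ℝ) := by
    have := (Nat.cast_le (α := ℝ)).2 hN2H
    push_cast at this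
    linarith
  have hH0 : (0:ℝ) < H := by linarith
  -- sqrt facts
  have hSnle : (Sn:ℝ) ≤ Real.sqrt N := Real.nat_sqrt_le_real_sqrt
  have hsqle : Real.sqrt N ≤ (Sn:ℝ) + 1 := by
    have := Real.real_sqrt_le_nat_sqrt_succ (a := N)
    push_cast at this
    exact this
  have hsq1 : (1:ℝ) ≤ Real.sqrt N := by
    rw [show (1:ℝ) = Real.sqrt 1 by simp]
    exact Real.sqrt_le_sqrt (by linarith)
  have hsqmul : Real.sqrt N * Real.sqrt N = (N:ℝ) := Real.mul_self_sqrt hN0.le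
  -- bound on u for large indices
  have hubig : ∀ m : ℕ, Sn + 1 ≤ m → u m ≤ 2*A/L := by
    intro m hm
    have hm0 : n₀ ≤ m := le_trans hn0sq hm
    have h1 := hn₀ m hm0
    have hlogm : L/2 ≤ Real.log m := by
      have hc : Real.sqrt N ≤ (m:ℝ) := le_trans hsqle (by exact_mod_cast hm)
      have hsp : (0:ℝ) < Real.sqrt N := by linarith
      have := Real.log_le_log hsp hc
      rwa [Real.log_sqrt hN0.le] at this
    have hlm0 : (0:ℝ) < Real.log m := by linarith
    have hum : u m ≤ A / Real.log m := by
      rw [le_div_iff₀ hlm0]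
      calc u m * Real.log m = Real.log m * u m := by ring
        _ ≤ A := h1
    calc u m ≤ A / Real.log m := hum
      _ ≤ A / (L/2) := div_le_div_of_nonneg_left hA0.le (by linarith) hlogm
      _ = 2*A/L := by
          field_simp
  -- membership facts
  have memF : ∀ p : ℕ × ℕ, p ∈ F → p.1 < N+2 ∧ p.2 < N+2 ∧ (p.1:ℝ) ≤ (N:ℝ)/2 ∧
      (N:ℝ)/2 ≤ (p.2:ℝ) ∧ (N:ℝ)/L ≤ (p.2:ℝ) - p.1 := by
    intro p hp
    rw [hF_def, Finset.mem_filter, Finset.mem_product, Finset.mem_range, Finset.mem_range] at hp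
    exact ⟨hp.1.1, hp.1.2, hp.2.1, hp.2.2.1, hp.2.2.2⟩
  have memF2 : ∀ p : ℕ × ℕ, p ∈ F → p.1 ≤ p.2 ∧ 1 ≤ p.2 - p.1 ∧
      ((p.2 - p.1 : ℕ):ℝ) = (p.2:ℝ) - p.1 ∧ (N:ℝ)/L ≤ ((p.2 - p.1 : ℕ):ℝ) := by
    intro p hp
    obtain ⟨-, -, h3, h4, h5⟩ := memF p hp
    have hle : p.1 ≤ p.2 := by
      have : (p.1:ℝ) ≤ (p.2:ℝ) := by linarith
      exact_mod_cast this
    have hcast : ((p.2 - p.1 : ℕ):ℝ) = (p.2:ℝ) - p.1 := by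
      push_cast [Nat.cast_sub hle]; ring
    have h6 : (N:ℝ)/L ≤ ((p.2 - p.1 : ℕ):ℝ) := by rw [hcast]; exact h5
    have h7 : 1 ≤ p.2 - p.1 := by
      have : (1:ℝ) ≤ ((p.2 - p.1 : ℕ):ℝ) := le_trans hT1 h6
      exact_mod_cast this
    exact ⟨hle, h7, hcast, h6⟩
  -- Region A bound
  have hFA_sub : F.filter (fun p => p.1 ≤ Sn) ⊆
      (Finset.range (Sn+1) ×ˢ Finset.range (N+2)).filter
        (fun p => (N:ℝ)/L ≤ (p.2:ℝ) - p.1) := by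
    intro p hp
    rw [Finset.mem_filter] at hp
    obtain ⟨hpF, hpSn⟩ := hp
    obtain ⟨h1, h2, -, -, h5⟩ := memF p hpF
    rw [Finset.mem_filter, Finset.mem_product, Finset.mem_range, Finset.mem_range]
    exact ⟨⟨by omega, h2⟩, h5⟩
  have hA_q : ∑ p ∈ F.filter (fun p => p.1 ≤ Sn), q (p.2 - p.1)
      ≤ ((Sn:ℝ)+1) * (2*K*L/N) := by
    calc ∑ p ∈ F.filter (fun p => p.1 ≤ Sn), q (p.2 - p.1)
        ≤ ∑ p ∈ (Finset.range (Sn+1) ×ˢ Finset.range (N+2)).filter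
            (fun p => (N:ℝ)/L ≤ (p.2:ℝ) - p.1), q (p.2 - p.1) :=
          Finset.sum_le_sum_of_subset_of_nonneg hFA_sub (fun p _ _ => hq0 _)
      _ = ∑ i ∈ Finset.range (Sn+1), ∑ j ∈ (Finset.range (N+2)).filter
            (fun j : ℕ => (N:ℝ)/L ≤ (j:ℝ) - i), q (j - i) :=
          sum_prod_filter_eq _ _ (fun i j => (N:ℝ)/L ≤ (j:ℝ) - i) (fun p => q (p.2 - p.1))
      _ ≤ ∑ i ∈ Finset.range (Sn+1), 2*K/((N:ℝ)/L) :=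
          Finset.sum_le_sum (fun i _ => tail_bound q hq0 K hK0 hK i N _ hT1)
      _ = ((Sn:ℝ)+1) * (2*K/((N:ℝ)/L)) := by
          rw [Finset.sum_const, Finset.card_range, nsmul_eq_mul]
          push_cast; ring
      _ = ((Sn:ℝ)+1) * (2*K*L/N) := by
          rw [div_div_eq_mul_div]
  have hSA : ∑ p ∈ F.filter (fun p => p.1 ≤ Sn), u p.1 * q (p.2 - p.1) * u (N + 1 - p.2)
      ≤ M^2 * (((Sn:ℝ)+1) * (2*K*L/N)) := by
    calc ∑ p ∈ F.filter (fun p => p.1 ≤ Sn), u p.1 * q (p.2 - p.1) * u (N + 1 - p.2)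
        ≤ ∑ p ∈ F.filter (fun p => p.1 ≤ Sn), M^2 * q (p.2 - p.1) := by
          refine Finset.sum_le_sum fun p _ => ?_
          have h1 := hM p.1
          have h2 := hM (N+1-p.2)
          have hq := hq0 (p.2 - p.1)
          have h3 : u p.1 * u (N+1-p.2) * q (p.2-p.1) ≤ M*M*q (p.2-p.1) :=
            mul_le_mul_of_nonneg_right
              (mul_le_mul h1 h2 (hu0 _) (by linarith)) hq
          calc u p.1 * q (p.2-p.1) * u (N+1-p.2)
              = u p.1 * u (N+1-p.2) * q (p.2-p.1) := by ring
            _ ≤ M*M*q (p.2-p.1) := h3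
            _ = M^2 * q (p.2-p.1) := by ring
      _ = M^2 * ∑ p ∈ F.filter (fun p => p.1 ≤ Sn), q (p.2 - p.1) :=
          (Finset.mul_sum _ _ _).symm
      _ ≤ M^2 * (((Sn:ℝ)+1) * (2*K*L/N)) :=
          mul_le_mul_of_nonneg_left hA_q (by positivity)
  -- Region B2 bound
  have hG2_sub : (F.filter (fun p => ¬ p.1 ≤ Sn)).filter (fun p => ¬ (p.2 + Sn ≤ N)) ⊆
      Finset.range (N+2) ×ˢ Finset.Icc (N+1-Sn) (N+1) := by
    intro p hp
    rw [Finset.mem_filter, Finset.mem_filter] at hp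
    obtain ⟨⟨hpF, -⟩, hp2⟩ := hp
    obtain ⟨h1, h2, -, -, -⟩ := memF p hpF
    rw [Finset.mem_product, Finset.mem_range, Finset.mem_Icc]
    exact ⟨h1, by omega, by omega⟩
  have hG2_card : ((F.filter (fun p => ¬ p.1 ≤ Sn)).filter (fun p => ¬ (p.2 + Sn ≤ N))).card
      ≤ (N+2) * (Sn+1) := by
    refine le_trans (Finset.card_le_card hG2_sub) ?_
    rw [Finset.card_product, Finset.card_range, Nat.card_Icc]
    have h : N + 1 + 1 - (N + 1 - Sn) = Sn + 1 := by omega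
    rw [h]
  have hterm2 : ∀ p ∈ (F.filter (fun p => ¬ p.1 ≤ Sn)).filter (fun p => ¬ (p.2 + Sn ≤ N)),
      u p.1 * q (p.2 - p.1) * u (N + 1 - p.2) ≤ M^2 * (K*(L/N)^2) := by
    intro p hp
    rw [Finset.mem_filter, Finset.mem_filter] at hp
    have hpF : p ∈ F := hp.1.1
    obtain ⟨-, hd1, hcast, hdge⟩ := memF2 p hpF
    have hqd : q (p.2-p.1) ≤ K*(L/N)^2 := by
      have hx0 : (0:ℝ) < ((p.2-p.1 : ℕ):ℝ) := lt_of_lt_of_le hTpos hdge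
      have hsq : ((N:ℝ)/L)^2 ≤ ((p.2-p.1 : ℕ):ℝ)^2 := by
        apply pow_le_pow_left₀ hTpos.le hdge
      have hinv : (((p.2-p.1 : ℕ):ℝ)^2)⁻¹ ≤ (((N:ℝ)/L)^2)⁻¹ :=
        inv_anti₀ (by positivity) hsq
      have heq : (((N:ℝ)/L)^2)⁻¹ = (L/N)^2 := by
        rw [← inv_pow, inv_div]
      calc q (p.2-p.1) ≤ K * (((p.2-p.1 : ℕ):ℝ)^2)⁻¹ := hK _ hd1
        _ ≤ K * (((N:ℝ)/L)^2)⁻¹ := mul_le_mul_of_nonneg_left hinv hK0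
        _ = K * (L/N)^2 := by rw [heq]
    have h1 := hM p.1
    have h2 := hM (N+1-p.2)
    have h3 : u p.1 * u (N+1-p.2) ≤ M * M :=
      mul_le_mul h1 h2 (hu0 _) (by linarith)
    have h4 : u p.1 * u (N+1-p.2) * q (p.2-p.1) ≤ (M*M) * (K*(L/N)^2) := by
      apply mul_le_mul h3 hqd (hq0 _) (by positivity)
    calc u p.1 * q (p.2-p.1) * u (N+1-p.2)
        = u p.1 * u (N+1-p.2) * q (p.2-p.1) := by ring
      _ ≤ (M*M) * (K*(L/N)^2) := h4
      _ = M^2 * (K*(L/N)^2) := by ring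
  have hSB2 : ∑ p ∈ (F.filter (fun p => ¬ p.1 ≤ Sn)).filter (fun p => ¬ (p.2 + Sn ≤ N)),
      u p.1 * q (p.2 - p.1) * u (N + 1 - p.2)
      ≤ ((N:ℝ)+2) * ((Sn:ℝ)+1) * (M^2 * (K*(L/N)^2)) := by
    calc ∑ p ∈ (F.filter (fun p => ¬ p.1 ≤ Sn)).filter (fun p => ¬ (p.2 + Sn ≤ N)),
        u p.1 * q (p.2 - p.1) * u (N + 1 - p.2)
        ≤ ((F.filter (fun p => ¬ p.1 ≤ Sn)).filter (fun p => ¬ (p.2 + Sn ≤ N))).card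
            • (M^2 * (K*(L/N)^2)) :=
          Finset.sum_le_card_nsmul _ _ _ hterm2
      _ = (((F.filter (fun p => ¬ p.1 ≤ Sn)).filter (fun p => ¬ (p.2 + Sn ≤ N))).card : ℝ)
            * (M^2 * (K*(L/N)^2)) := nsmul_eq_mul _ _
      _ ≤ (((N+2) * (Sn+1) : ℕ) : ℝ) * (M^2 * (K*(L/N)^2)) := by
          apply mul_le_mul_of_nonneg_right _ (by positivity)
          exact_mod_cast hG2_card
      _ = ((N:ℝ)+2) * ((Sn:ℝ)+1) * (M^2 * (K*(L/N)^2)) := by push_cast; ring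
  -- Region B1 bound
  set Tn := ⌈(N:ℝ)/L⌉₊ with hTn_def
  have hTn1 : 1 ≤ Tn := Nat.one_le_ceil_iff.2 hTpos
  have hTnceil : (N:ℝ)/L ≤ (Tn:ℝ) := Nat.le_ceil _
  have hTnlt : (Tn:ℝ) < (N:ℝ)/L + 1 := Nat.ceil_lt_add_one hTpos.le
  have hNL4 : (N:ℝ)/L ≤ (N:ℝ)/4 := div_le_div_of_nonneg_left hN0.le (by norm_num) hL4
  have hTnH : Tn ≤ H := by
    have : (Tn:ℝ) ≤ (H:ℝ) := by linarith
    exact_mod_cast this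
  set r : ℕ → ℝ := fun k => if k ≤ Tn then L/N else 1/k with hr_def
  have hG1_sub : (F.filter (fun p => ¬ p.1 ≤ Sn)).filter (fun p => p.2 + Sn ≤ N) ⊆
      (Finset.range (H+1) ×ˢ Finset.range (N+2)).filter
        (fun p => max ((N:ℝ)/L) ((N:ℝ)/2 - p.1) ≤ (p.2:ℝ) - p.1) := by
    intro p hp
    rw [Finset.mem_filter, Finset.mem_filter] at hp
    obtain ⟨⟨hpF, -⟩, -⟩ := hp
    obtain ⟨-, h2, h3, h4, h5⟩ := memF p hpF
    rw [Finset.mem_filter, Finset.mem_product, Finset.mem_range, Finset.mem_range]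
    refine ⟨⟨?_, h2⟩, ?_⟩
    · have : 2 * p.1 ≤ N := by
        have : ((2 * p.1 : ℕ):ℝ) ≤ (N:ℝ) := by push_cast; linarith
        exact_mod_cast this
      omega
    · exact max_le h5 (by linarith)
  have hri : ∀ i ∈ Finset.range (H+1),
      2*K/(max ((N:ℝ)/L) ((N:ℝ)/2 - i)) ≤ 2*K * r (H - i) := by
    intro i hi
    rw [Finset.mem_range] at hi
    have hiH : i ≤ H := by omega
    have hmax0 : (0:ℝ) < max ((N:ℝ)/L) ((N:ℝ)/2 - i) := lt_of_lt_of_le hTpos (le_max_left _ _)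
    by_cases hc : H - i ≤ Tn
    · have hrv : r (H - i) = L/N := by rw [hr_def]; simp only [if_pos hc]
      rw [hrv]
      calc 2*K/(max ((N:ℝ)/L) ((N:ℝ)/2 - i)) ≤ 2*K/((N:ℝ)/L) :=
            div_le_div_of_nonneg_left (by linarith) hTpos (le_max_left _ _)
        _ = 2*K*(L/N) := by
            rw [div_div_eq_mul_div]; ring
    · push_neg at hc
      have hrv : r (H - i) = 1/((H - i : ℕ):ℝ) := by
        rw [hr_def]; simp only [if_neg (not_le.2 hc)]
      rw [hrv]
      have hk0 : 0 < H - i := by omega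
      have hk0R : (0:ℝ) < ((H - i : ℕ):ℝ) := by exact_mod_cast hk0
      have hcast : ((H - i : ℕ):ℝ) = (H:ℝ) - i := by
        push_cast [Nat.cast_sub hiH]; ring
      have h1 : ((H - i : ℕ):ℝ) ≤ max ((N:ℝ)/L) ((N:ℝ)/2 - i) := by
        rw [hcast]
        refine le_trans ?_ (le_max_right _ _)
        linarith
      calc 2*K/(max ((N:ℝ)/L) ((N:ℝ)/2 - i)) ≤ 2*K/((H - i : ℕ):ℝ) :=
            div_le_div_of_nonneg_left (by linarith) hk0R h1
        _ = 2*K*(1/((H - i : ℕ):ℝ)) := by ring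
  have hsum_r : ∑ k ∈ Finset.range (H+1), r k ≤ 2 + Real.log L := by
    rw [← Finset.sum_range_add_sum_Ico r (show Tn+1 ≤ H+1 by omega)]
    have p1 : ∑ k ∈ Finset.range (Tn+1), r k ≤ 2 := by
      have he : ∀ k ∈ Finset.range (Tn+1), r k = L/N := by
        intro k hk
        rw [Finset.mem_range] at hk
        rw [hr_def]; simp only [if_pos (show k ≤ Tn by omega)]
      rw [Finset.sum_congr rfl he, Finset.sum_const, Finset.card_range, nsmul_eq_mul]
      have h2 : (2:ℝ) ≤ (N:ℝ)/L := by rw [le_div_iff₀ hL0]; linarith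
      have h3 : (0:ℝ) < L/N := by positivity
      calc ((Tn+1 : ℕ):ℝ) * (L/N) ≤ (2*((N:ℝ)/L)) * (L/N) := by
            apply mul_le_mul_of_nonneg_right _ h3.le
            push_cast; linarith
        _ = 2 := by field_simp
    have p2 : ∑ k ∈ Finset.Ico (Tn+1) (H+1), r k ≤ Real.log L := by
      have he : ∀ k ∈ Finset.Ico (Tn+1) (H+1), r k = 1/(k:ℝ) := by
        intro k hk
        rw [Finset.mem_Ico] at hk
        rw [hr_def]; simp only [if_neg (show ¬ k ≤ Tn by omega)]
      rw [Finset.sum_congr rfl he, Finset.sum_Ico_eq_sum_range]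
      have hidx : H+1-(Tn+1) = H - Tn := by omega
      rw [hidx]
      have hlog := sum_range_inv_le_log Tn (H - Tn) hTn1
      calc ∑ i ∈ Finset.range (H - Tn), 1/((Tn+1+i : ℕ):ℝ)
          = ∑ i ∈ Finset.range (H - Tn), (1:ℝ)/((Tn:ℝ)+1+i) := by
            refine Finset.sum_congr rfl fun i _ => ?_
            congr 1
            push_cast; ring
        _ ≤ Real.log ((Tn:ℝ) + ((H - Tn : ℕ):ℝ)) - Real.log Tn := hlog
        _ = Real.log (H:ℝ) - Real.log (Tn:ℝ) := by
            congr 2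
            push_cast [Nat.cast_sub hTnH]; ring
        _ ≤ Real.log L := by
            have hTn0R : (0:ℝ) < (Tn:ℝ) := by
              have : (1:ℕ) ≤ Tn := hTn1
              exact_mod_cast this
            have e1 : Real.log (H:ℝ) ≤ Real.log ((N:ℝ)/2) := Real.log_le_log hH0 hHR
            have e2 : Real.log ((N:ℝ)/L) ≤ Real.log (Tn:ℝ) := Real.log_le_log hTpos hTnceil
            rw [Real.log_div (ne_of_gt hN0) (by norm_num)] at e1
            rw [Real.log_div (ne_of_gt hN0) (ne_of_gt hL0)] at e2
            have e3 : (0:ℝ) ≤ Real.log 2 := Real.log_nonneg (by norm_num)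
            linarith
    linarith
  have hq_G1 : ∑ p ∈ (F.filter (fun p => ¬ p.1 ≤ Sn)).filter (fun p => p.2 + Sn ≤ N),
      q (p.2 - p.1) ≤ 2*K*(2 + Real.log L) := by
    calc ∑ p ∈ (F.filter (fun p => ¬ p.1 ≤ Sn)).filter (fun p => p.2 + Sn ≤ N), q (p.2 - p.1)
        ≤ ∑ p ∈ (Finset.range (H+1) ×ˢ Finset.range (N+2)).filter
            (fun p => max ((N:ℝ)/L) ((N:ℝ)/2 - p.1) ≤ (p.2:ℝ) - p.1), q (p.2 - p.1) :=
          Finset.sum_le_sum_of_subset_of_nonneg hG1_sub (fun p _ _ => hq0 _)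
      _ = ∑ i ∈ Finset.range (H+1), ∑ j ∈ (Finset.range (N+2)).filter
            (fun j : ℕ => max ((N:ℝ)/L) ((N:ℝ)/2 - i) ≤ (j:ℝ) - i), q (j - i) :=
          sum_prod_filter_eq _ _ (fun i j => max ((N:ℝ)/L) ((N:ℝ)/2 - i) ≤ (j:ℝ) - i)
            (fun p => q (p.2 - p.1))
      _ ≤ ∑ i ∈ Finset.range (H+1), 2*K/(max ((N:ℝ)/L) ((N:ℝ)/2 - i)) :=
          Finset.sum_le_sum (fun i _ => tail_bound q hq0 K hK0 hK i N _
            (le_trans hT1 (le_max_left _ _)))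
      _ ≤ ∑ i ∈ Finset.range (H+1), 2*K * r (H - i) := Finset.sum_le_sum hri
      _ = 2*K * ∑ i ∈ Finset.range (H+1), r (H - i) := by rw [Finset.mul_sum]
      _ = 2*K * ∑ k ∈ Finset.range (H+1), r k := by
          congr 1
          rw [← Finset.sum_range_reflect r (H+1)]
          refine Finset.sum_congr rfl fun i _ => by norm_num
      _ ≤ 2*K * (2 + Real.log L) := by
          apply mul_le_mul_of_nonneg_left hsum_r (by linarith)
  have hSB1 : ∑ p ∈ (F.filter (fun p => ¬ p.1 ≤ Sn)).filter (fun p => p.2 + Sn ≤ N),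
      u p.1 * q (p.2 - p.1) * u (N + 1 - p.2)
      ≤ (2*A/L)^2 * (2*K*(2 + Real.log L)) := by
    have hAL0 : (0:ℝ) < 2*A/L := by positivity
    calc ∑ p ∈ (F.filter (fun p => ¬ p.1 ≤ Sn)).filter (fun p => p.2 + Sn ≤ N),
        u p.1 * q (p.2 - p.1) * u (N + 1 - p.2)
        ≤ ∑ p ∈ (F.filter (fun p => ¬ p.1 ≤ Sn)).filter (fun p => p.2 + Sn ≤ N),
            (2*A/L)^2 * q (p.2 - p.1) := by
          refine Finset.sum_le_sum fun p hp => ?_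
          have hpmem := hp
          rw [Finset.mem_filter, Finset.mem_filter] at hpmem
          obtain ⟨⟨hpF, hp1⟩, hp2⟩ := hpmem
          rw [not_le] at hp1
          have hub1 : u p.1 ≤ 2*A/L := hubig p.1 (by omega)
          have hub2 : u (N+1-p.2) ≤ 2*A/L := hubig (N+1-p.2) (by omega)
          have h3 : u p.1 * u (N+1-p.2) ≤ (2*A/L) * (2*A/L) :=
            mul_le_mul hub1 hub2 (hu0 _) hAL0.le
          have h4 : u p.1 * u (N+1-p.2) * q (p.2-p.1) ≤ ((2*A/L)*(2*A/L)) * q (p.2-p.1) :=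
            mul_le_mul_of_nonneg_right h3 (hq0 _)
          calc u p.1 * q (p.2-p.1) * u (N+1-p.2)
              = u p.1 * u (N+1-p.2) * q (p.2-p.1) := by ring
            _ ≤ ((2*A/L)*(2*A/L)) * q (p.2-p.1) := h4
            _ = (2*A/L)^2 * q (p.2-p.1) := by ring
      _ = (2*A/L)^2 * ∑ p ∈ (F.filter (fun p => ¬ p.1 ≤ Sn)).filter (fun p => p.2 + Sn ≤ N),
            q (p.2 - p.1) := (Finset.mul_sum _ _ _).symm
      _ ≤ (2*A/L)^2 * (2*K*(2 + Real.log L)) :=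
          mul_le_mul_of_nonneg_left hq_G1 (by positivity)
  -- combine the three regions
  have hsplit : ∑ p ∈ F, u p.1 * q (p.2 - p.1) * u (N + 1 - p.2)
      = (∑ p ∈ F.filter (fun p => p.1 ≤ Sn), u p.1 * q (p.2 - p.1) * u (N + 1 - p.2))
        + ((∑ p ∈ (F.filter (fun p => ¬ p.1 ≤ Sn)).filter (fun p => p.2 + Sn ≤ N),
             u p.1 * q (p.2 - p.1) * u (N + 1 - p.2))
          + (∑ p ∈ (F.filter (fun p => ¬ p.1 ≤ Sn)).filter (fun p => ¬ (p.2 + Sn ≤ N)),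
             u p.1 * q (p.2 - p.1) * u (N + 1 - p.2))) := by
    rw [Finset.sum_filter_add_sum_filter_not
      (F.filter (fun p => ¬ p.1 ≤ Sn)) (fun p => p.2 + Sn ≤ N)]
    rw [Finset.sum_filter_add_sum_filter_not F (fun p => p.1 ≤ Sn)]
  have hNum : ∑ p ∈ F, u p.1 * q (p.2 - p.1) * u (N + 1 - p.2)
      ≤ M^2 * (((Sn:ℝ)+1) * (2*K*L/N)) + ((2*A/L)^2 * (2*K*(2 + Real.log L))
        + ((N:ℝ)+2) * ((Sn:ℝ)+1) * (M^2 * (K*(L/N)^2))) := by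
    rw [hsplit]
    exact add_le_add hSA (add_le_add hSB1 hSB2)
  have hNum0 : (0:ℝ) ≤ ∑ p ∈ F, u p.1 * q (p.2 - p.1) * u (N + 1 - p.2) :=
    Finset.sum_nonneg fun p _ =>
      mul_nonneg (mul_nonneg (hu0 _) (hq0 _)) (hu0 _)
  -- denominator
  have hlogN1pos : (0:ℝ) < Real.log ((N:ℝ)+1) := Real.log_pos (by linarith)
  have hupos : (0:ℝ) < u (N+1) := by
    by_contra hcon
    push_neg at hcon
    have h1 : Real.log ((N:ℝ)+1) * u (N+1) ≤ 0 :=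
      mul_nonpos_of_nonneg_of_nonpos hlogN1pos.le hcon
    have h2 : (0:ℝ) < 1/(2*C) := by positivity
    linarith
  have hDle : (1/(2*C))/Real.log ((N:ℝ)+1) ≤ u (N+1) := by
    rw [div_le_iff₀ hlogN1pos]
    calc 1/(2*C) ≤ Real.log ((N:ℝ)+1) * u (N+1) := hden
      _ = u (N+1) * Real.log ((N:ℝ)+1) := by ring
  have hDpos : (0:ℝ) < (1/(2*C))/Real.log ((N:ℝ)+1) := by positivity
  have hlog2L : Real.log ((N:ℝ)+1) ≤ 2*L := by
    have h1 : (N:ℝ)+1 ≤ (N:ℝ)^2 := by nlinarith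
    have h2 : Real.log ((N:ℝ)+1) ≤ Real.log ((N:ℝ)^2) := Real.log_le_log (by linarith) h1
    rw [Real.log_pow] at h2
    push_cast at h2
    linarith
  -- core numeric facts for the final assembly
  have hsnsq : ((Sn:ℝ)+1) * Real.sqrt N ≤ 2*(N:ℝ) := by nlinarith
  have hcore1 : ((Sn:ℝ)+1)/(N:ℝ) ≤ 2*L/Real.sqrt N := by
    rw [div_le_div_iff₀ hN0 (by linarith)]
    nlinarith
  have hcore2 : ((N:ℝ)+2)*((Sn:ℝ)+1)/((N:ℝ)^2) ≤ 4/Real.sqrt N := by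
    rw [div_le_div_iff₀ (by positivity) (by linarith)]
    have hN2 : (N:ℝ)+2 ≤ 2*(N:ℝ) := by linarith
    nlinarith [mul_le_mul hN2 hsnsq (by positivity) (by linarith)]
  -- final computation
  have final : (M^2 * (((Sn:ℝ)+1) * (2*K*L/N)) + ((2*A/L)^2 * (2*K*(2 + Real.log L))
        + ((N:ℝ)+2) * ((Sn:ℝ)+1) * (M^2 * (K*(L/N)^2)))) * (2*C*(2*L))
      ≤ 32*C*M^2*K * (L^3 / Real.sqrt N) + 32*C*A^2*K * ((2 + Real.log L) / L) := by
    have e1 : M^2 * (((Sn:ℝ)+1) * (2*K*L/N)) * (2*C*(2*L))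
        ≤ 16*C*M^2*K * (L^3 / Real.sqrt N) := by
      have := mul_le_mul_of_nonneg_left hcore1
        (show (0:ℝ) ≤ 8*C*M^2*K*L^2 by positivity)
      calc M^2 * (((Sn:ℝ)+1) * (2*K*L/N)) * (2*C*(2*L))
          = (8*C*M^2*K*L^2) * (((Sn:ℝ)+1)/(N:ℝ)) := by ring
        _ ≤ (8*C*M^2*K*L^2) * (2*L/Real.sqrt N) := this
        _ = 16*C*M^2*K * (L^3 / Real.sqrt N) := by ring
    have e2 : ((N:ℝ)+2) * ((Sn:ℝ)+1) * (M^2 * (K*(L/N)^2)) * (2*C*(2*L))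
        ≤ 16*C*M^2*K * (L^3 / Real.sqrt N) := by
      have := mul_le_mul_of_nonneg_left hcore2
        (show (0:ℝ) ≤ 4*C*M^2*K*L^3 by positivity)
      calc ((N:ℝ)+2) * ((Sn:ℝ)+1) * (M^2 * (K*(L/N)^2)) * (2*C*(2*L))
          = (4*C*M^2*K*L^3) * (((N:ℝ)+2)*((Sn:ℝ)+1)/((N:ℝ)^2)) := by ring
        _ ≤ (4*C*M^2*K*L^3) * (4/Real.sqrt N) := this
        _ = 16*C*M^2*K * (L^3 / Real.sqrt N) := by ring
    have e3 : (2*A/L)^2 * (2*K*(2 + Real.log L)) * (2*C*(2*L))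
        = 32*C*A^2*K * ((2 + Real.log L) / L) := by
      field_simp
      ring
    linarith [e1, e2, e3,
      (by ring : (M^2 * (((Sn:ℝ)+1) * (2*K*L/N)) + ((2*A/L)^2 * (2*K*(2 + Real.log L))
        + ((N:ℝ)+2) * ((Sn:ℝ)+1) * (M^2 * (K*(L/N)^2)))) * (2*C*(2*L))
        = M^2 * (((Sn:ℝ)+1) * (2*K*L/N)) * (2*C*(2*L))
          + ((2*A/L)^2 * (2*K*(2 + Real.log L)) * (2*C*(2*L))
          + ((N:ℝ)+2) * ((Sn:ℝ)+1) * (M^2 * (K*(L/N)^2)) * (2*C*(2*L))))]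
  -- put everything together
  have hmulpos : (0:ℝ) ≤ 2*C*Real.log ((N:ℝ)+1) := by positivity
  have hlogL0 : (0:ℝ) ≤ Real.log L := Real.log_nonneg (by linarith)
  have hR0 : (0:ℝ) ≤ M^2 * (((Sn:ℝ)+1) * (2*K*L/N)) + ((2*A/L)^2 * (2*K*(2 + Real.log L))
        + ((N:ℝ)+2) * ((Sn:ℝ)+1) * (M^2 * (K*(L/N)^2))) := by
    have a1 : (0:ℝ) ≤ M^2 * (((Sn:ℝ)+1) * (2*K*L/N)) := by positivity
    have a2 : (0:ℝ) ≤ (2*A/L)^2 * (2*K*(2 + Real.log L)) :=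
      mul_nonneg (by positivity) (mul_nonneg (by linarith) (by linarith))
    have a3 : (0:ℝ) ≤ ((N:ℝ)+2) * ((Sn:ℝ)+1) * (M^2 * (K*(L/N)^2)) := by positivity
    linarith
  calc (∑ p ∈ F, u p.1 * q (p.2 - p.1) * u (N + 1 - p.2)) / u (N+1)
      ≤ (∑ p ∈ F, u p.1 * q (p.2 - p.1) * u (N + 1 - p.2))
          / ((1/(2*C))/Real.log ((N:ℝ)+1)) :=
        div_le_div_of_nonneg_left hNum0 hDpos hDle
    _ = (∑ p ∈ F, u p.1 * q (p.2 - p.1) * u (N + 1 - p.2)) * (2*C*Real.log ((N:ℝ)+1)) := by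
        have h1 : C ≠ 0 := ne_of_gt hC
        have h2 : Real.log ((N:ℝ)+1) ≠ 0 := ne_of_gt hlogN1pos
        field_simp
    _ ≤ (M^2 * (((Sn:ℝ)+1) * (2*K*L/N)) + ((2*A/L)^2 * (2*K*(2 + Real.log L))
          + ((N:ℝ)+2) * ((Sn:ℝ)+1) * (M^2 * (K*(L/N)^2)))) * (2*C*(2*L)) := by
        apply mul_le_mul hNum ?_ hmulpos hR0
        apply mul_le_mul_of_nonneg_left hlog2L (by positivity)
    _ ≤ 32*C*M^2*K * (L^3 / Real.sqrt N) + 32*C*A^2*K * ((2 + Real.log L) / L) := final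



/-- Let `q` be a probability mass function on `ℕ` with `q(n) ~ C/n²`, and let
`u(n) = ∑_{k ≥ 0} q^{*k}(n)` be the renewal mass function, so that `u(n) ~ 1/(C log n)`.
Then `∑_{0 ≤ i ≤ N/2 ≤ j ≤ N+1, j-i ≥ N/log N} u(i) q(j-i) u(N+1-j) / u(N+1) → 0`. -/
theorem stmt_8 (q : ℕ → ℝ) (hq0 : ∀ n, 0 ≤ q n) (hq1 : ∀ n, q n ≤ 1) (hqsum : HasSum q 1)
    (C : ℝ) (hC : 0 < C)
    (hqa : Tendsto (fun n : ℕ => (n : ℝ) ^ 2 * q n) atTop (nhds C))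
    (u : ℕ → ℝ) (hu : ∀ n, u n = ∑' k : ℕ, convPow q k n)
    (hua : Tendsto (fun n : ℕ => Real.log n * u n) atTop (nhds (1 / C))) :
    Tendsto (fun N : ℕ =>
      (∑ p ∈ (Finset.range (N + 2) ×ˢ Finset.range (N + 2)).filter
          (fun p => (p.1 : ℝ) ≤ N / 2 ∧ (N : ℝ) / 2 ≤ p.2 ∧
            (N : ℝ) / Real.log N ≤ (p.2 : ℝ) - p.1),
        u p.1 * q (p.2 - p.1) * u (N + 1 - p.2)) / u (N + 1))
      atTop (nhds 0) := by
  have hu0 : ∀ n, 0 ≤ u n := by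
    intro n
    rw [hu n]
    exact tsum_nonneg (fun k => convPow_nonneg hq0 k n)
  have hlogN : Tendsto (fun n : ℕ => Real.log n) atTop atTop :=
    Real.tendsto_log_atTop.comp tendsto_natCast_atTop_atTop
  have huz : Tendsto u atTop (nhds 0) := by
    have h1 : Tendsto (fun n : ℕ => (Real.log n)⁻¹) atTop (nhds 0) :=
      hlogN.inv_tendsto_atTop
    have h2 := hua.mul h1
    rw [mul_zero] at h2
    apply h2.congr'
    filter_upwards [eventually_ge_atTop 3] with n hn
    have : (0:ℝ) < Real.log n := Real.log_pos (by exact_mod_cast by omega)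
    field_simp
  obtain ⟨M0, hM0⟩ := huz.bddAbove_range
  set M := max M0 1 with hM_def
  have hM1 : 1 ≤ M := le_max_right _ _
  have hM : ∀ n, u n ≤ M := fun n =>
    le_trans (hM0 (Set.mem_range_self n)) (le_max_left _ _)
  obtain ⟨K0, hK0'⟩ := hqa.bddAbove_range
  set K := max K0 1 with hK_def
  have hK1 : 1 ≤ K := le_max_right _ _
  have hK : ∀ d : ℕ, 1 ≤ d → q d ≤ K * ((d : ℝ) ^ 2)⁻¹ := by
    intro d hd
    have h1 : (d:ℝ)^2 * q d ≤ K :=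
      le_trans (hK0' (Set.mem_range_self d)) (le_max_left _ _)
    have h2 : (0:ℝ) < (d:ℝ)^2 := by
      have : (1:ℝ) ≤ d := by exact_mod_cast hd
      positivity
    rw [mul_comm, ← le_div_iff₀ h2] at h1
    calc q d ≤ K / (d:ℝ)^2 := h1
      _ = K * ((d:ℝ)^2)⁻¹ := by ring
  set A := 1/C + 1 with hA_def
  have hA0 : 0 < A := by positivity
  obtain ⟨n₀, hn₀⟩ : ∃ n₀ : ℕ, ∀ n, n₀ ≤ n → Real.log n * u n ≤ A := by
    have := hua.eventually_lt_const (show 1/C < A by rw [hA_def]; linarith)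
    rw [eventually_atTop] at this
    obtain ⟨n₀, h⟩ := this
    exact ⟨n₀, fun n hn => (h n hn).le⟩
  -- the limit of the bounding function
  have hg : Tendsto (fun N : ℕ => 32*C*M^2*K * ((Real.log N)^3 / Real.sqrt N)
      + 32*C*A^2*K * ((2 + Real.log (Real.log N)) / Real.log N)) atTop (nhds 0) := by
    have hsqrt : Tendsto (fun x : ℝ => Real.sqrt x) atTop atTop :=
      (tendsto_rpow_atTop (y := (1/2:ℝ)) (by norm_num)).congr
        (fun x => (Real.sqrt_eq_rpow x).symm)
    have h1 : Tendsto (fun N : ℕ => (Real.log N)^3 / Real.sqrt N) atTop (nhds 0) := by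
      have a : Tendsto (fun y : ℝ => (Real.log y)^3 / y) atTop (nhds 0) := by
        have := (Real.isLittleO_pow_log_id_atTop (n := 3)).tendsto_div_nhds_zero
        simpa using this
      have b : Tendsto (fun N : ℕ => Real.sqrt N) atTop atTop :=
        hsqrt.comp tendsto_natCast_atTop_atTop
      have c := (a.comp b).const_mul (8:ℝ)
      rw [mul_zero] at c
      apply c.congr'
      filter_upwards [eventually_ge_atTop 1] with N hN
      have hN0 : (0:ℝ) ≤ N := by positivity
      have hlog : Real.log (Real.sqrt N) = Real.log N / 2 := Real.log_sqrt hN0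
      simp only [Function.comp]
      rw [hlog]
      ring
    have h2 : Tendsto (fun N : ℕ => (2 + Real.log (Real.log N)) / Real.log N)
        atTop (nhds 0) := by
      have c : Tendsto (fun N : ℕ => 2 / Real.log N) atTop (nhds 0) :=
        tendsto_const_nhds.div_atTop hlogN
      have d : Tendsto (fun N : ℕ => Real.log (Real.log N) / Real.log N) atTop (nhds 0) := by
        have a : Tendsto (fun y : ℝ => Real.log y / y) atTop (nhds 0) := by
          have := Real.isLittleO_log_id_atTop.tendsto_div_nhds_zero
          simpa using this
        exact a.comp hlogN
      have := c.add d
      rw [add_zero] at this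
      apply this.congr
      intro N
      ring
    have := (h1.const_mul (32*C*M^2*K)).add (h2.const_mul (32*C*A^2*K))
    simpa using this
  -- eventual hypotheses
  have ev1 : ∀ᶠ N : ℕ in atTop, 256 ≤ N := eventually_ge_atTop 256
  have ev2 : ∀ᶠ N : ℕ in atTop, 4 ≤ Real.log N := hlogN.eventually_ge_atTop 4
  have ev3 : ∀ᶠ N : ℕ in atTop, 2 * Real.log N ≤ (N:ℝ) := by
    have h := Real.isLittleO_log_id_atTop.def (show (0:ℝ) < 1/2 by norm_num)
    have h2 := tendsto_natCast_atTop_atTop (R := ℝ) |>.eventually h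
    filter_upwards [h2, eventually_ge_atTop 1] with N hN hN1
    have hN0 : (0:ℝ) ≤ (N:ℝ) := by positivity
    rw [Real.norm_eq_abs, Real.norm_eq_abs, id] at hN
    have := le_abs_self (Real.log N)
    rw [abs_of_nonneg hN0] at hN
    linarith
  have ev4 : ∀ᶠ N : ℕ in atTop, n₀ ≤ Nat.sqrt N + 1 := by
    refine eventually_atTop.2 ⟨n₀*n₀, fun N hN => ?_⟩
    have h1 : Nat.sqrt (n₀*n₀) ≤ Nat.sqrt N := Nat.sqrt_le_sqrt hN
    have h2 : Nat.sqrt (n₀*n₀) = n₀ := by rw [show n₀*n₀ = n₀^2 by ring]; exact Nat.sqrt_eq' n₀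
    omega
  have ev5 : ∀ᶠ N : ℕ in atTop, 1/(2*C) ≤ Real.log ((N:ℝ)+1) * u (N+1) := by
    have hcomp : Tendsto (fun N : ℕ => Real.log ((N:ℝ)+1) * u (N+1)) atTop (nhds (1/C)) := by
      have h := hua.comp (tendsto_add_atTop_nat 1)
      apply h.congr
      intro N
      simp only [Function.comp]
      push_cast
      ring
    have hlt : 1/(2*C) < 1/C := by
      rw [div_lt_div_iff₀ (by linarith) hC]
      linarith
    exact (hcomp.eventually_const_lt hlt).mono (fun N h => h.le)
  apply squeeze_zero' (g := fun N : ℕ => 32*C*M^2*K * ((Real.log N)^3 / Real.sqrt N)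
      + 32*C*A^2*K * ((2 + Real.log (Real.log N)) / Real.log N))
  · filter_upwards with N
    apply div_nonneg _ (hu0 _)
    exact Finset.sum_nonneg fun p _ =>
      mul_nonneg (mul_nonneg (hu0 _) (hq0 _)) (hu0 _)
  · filter_upwards [ev1, ev2, ev3, ev4, ev5] with N h1 h2 h3 h4 h5
    exact key_est q u hq0 hu0 C M K A hC hM1 hM hK1 hK hA0 n₀ hn₀ N h1 h2 h3 h4 h5
  · exact hg
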